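/- arXiv:2010.02987 — 3 statements merged into one kernel-verified Lean document; each statement's English description precedes it below -/
import Mathlib

section
/- Under the contiguous semantics, a matched trend is exactly a contiguous infix (consecutive run) of the event stream, hence a stream of n events admits at most n(n+1)/2 trends matched by any pattern under the contiguous semantics. -/
attribute [local instance] Classical.propDecidable

/-- A trend under the contiguous semantics over a stream `l` (of strictly increasing
timestamps): a nonempty subsequence of `l` containing every stream event whose timestamp
lies strictly between the trend's start and end timestamps. -/
def ContiguousTrend (l tr : List ℕ) : Prop :=
  tr ≠ [] ∧ tr.Sublist l ∧ ∀ e ∈ l, tr.head! < e → e < tr.getLast! → e ∈ tr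

private lemma getLast!_eq_head!_rev (l : List ℕ) : l.getLast! = l.reverse.head! := by
  cases l with
  | nil => rfl
  | cons a t =>
    rw [List.head!_eq_head?, List.head?_reverse, List.getLast?_eq_getLast (l := a::t) (by simp)]
    rfl

private lemma head!_le_of_sorted {l : List ℕ} (h : l.Pairwise (· < ·)) {e : ℕ} (he : e ∈ l) :
    l.head! ≤ e := by
  cases l with
  | nil => simp at he
  | cons a t =>
    rcases List.mem_cons.mp he with rfl | he'
    · simp
    · simpa using le_of_lt ((List.pairwise_cons.mp h).1 e he')

private lemma le_getLast!_of_sorted {l : List ℕ} (h : l.Pairwise (· < ·)) {e : ℕ} (he : e ∈ l) :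
    e ≤ l.getLast! := by
  rw [getLast!_eq_head!_rev]
  have hrev : l.reverse.Pairwise (fun a b => b < a) := List.pairwise_reverse.mpr h
  have he' : e ∈ l.reverse := List.mem_reverse.mpr he
  cases hrl : l.reverse with
  | nil => rw [hrl] at he'; simp at he'
  | cons a t =>
    rw [hrl] at he' hrev
    rcases List.mem_cons.mp he' with rfl | h2
    · simp
    · simpa using le_of_lt ((List.pairwise_cons.mp hrev).1 e h2)

private lemma getLast!_mem {l : List ℕ} (h : l ≠ []) : l.getLast! ∈ l := by
  rw [getLast!_eq_head!_rev]
  have : l.reverse ≠ [] := by simpa using h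
  simpa using List.mem_reverse.mp (List.head!_mem_self this)

private lemma filter_le_prefix (hi : ℕ) {l : List ℕ} (h : l.Pairwise (· < ·)) :
    l.filter (fun e => decide (e ≤ hi)) <+: l := by
  induction l with
  | nil => simp
  | cons a t ih =>
    obtain ⟨h1, h2⟩ := List.pairwise_cons.mp h
    by_cases ha : a ≤ hi
    · rw [List.filter_cons_of_pos (by simpa using ha)]
      exact (List.cons_prefix_cons).mpr ⟨rfl, ih h2⟩
    · rw [List.filter_cons_of_neg (by simpa using ha)]
      have : t.filter (fun e => decide (e ≤ hi)) = [] := by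
        apply List.filter_eq_nil_iff.mpr
        intro x hx
        simp only [decide_eq_true_eq]
        exact fun hxle => ha (le_trans (h1 x hx).le hxle)
      rw [this]
      exact List.nil_prefix

private lemma filter_ge_suffix (lo : ℕ) {l : List ℕ} (h : l.Pairwise (· < ·)) :
    l.filter (fun e => decide (lo ≤ e)) <:+ l := by
  induction l with
  | nil => simp
  | cons a t ih =>
    obtain ⟨h1, h2⟩ := List.pairwise_cons.mp h
    by_cases ha : lo ≤ a
    · rw [List.filter_cons_of_pos (by simpa using ha),
        List.filter_eq_self.mpr (fun x hx => by
          simp only [decide_eq_true_eq]; exact ha.trans (h1 x hx).le)]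
    · rw [List.filter_cons_of_neg (by simpa using ha)]
      exact (ih h2).trans (List.suffix_cons a t)

private lemma filter_interval_infix (lo hi : ℕ) {l : List ℕ} (h : l.Pairwise (· < ·)) :
    l.filter (fun e => decide (lo ≤ e ∧ e ≤ hi)) <:+: l := by
  have heq : l.filter (fun e => decide (lo ≤ e ∧ e ≤ hi)) =
      (l.filter (fun e => decide (lo ≤ e))).filter (fun e => decide (e ≤ hi)) := by
    rw [List.filter_filter]
    apply List.filter_congr
    intro x _
    by_cases h1 : lo ≤ x <;> by_cases h2 : x ≤ hi <;> simp [h1, h2]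
  have hsorted' : (l.filter (fun e => decide (lo ≤ e))).Pairwise (· < ·) :=
    List.Pairwise.sublist List.filter_sublist h
  rw [heq]
  exact List.infix_iff_prefix_suffix.mpr
    ⟨l.filter (fun e => decide (lo ≤ e)), filter_le_prefix hi hsorted', filter_ge_suffix lo h⟩

private lemma trend_infix {l : List ℕ} (hs : l.Pairwise (· < ·)) {tr : List ℕ}
    (h : ContiguousTrend l tr) : tr <:+: l := by
  obtain ⟨hne, hsub, hbet⟩ := h
  have htr : tr.Pairwise (· < ·) := List.Pairwise.sublist hsub hs
  have hfs : (l.filter (fun e => decide (tr.head! ≤ e ∧ e ≤ tr.getLast!))).Pairwise (· < ·) :=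
    List.Pairwise.sublist List.filter_sublist hs
  haveI : IsAntisymm ℕ (· < ·) := ⟨fun a b h1 h2 => absurd h1 (asymm h2)⟩
  have key : tr = l.filter (fun e => decide (tr.head! ≤ e ∧ e ≤ tr.getLast!)) := by
    refine List.Perm.eq_of_pairwise (fun a b _ _ h1 h2 => absurd h1 (asymm h2)) htr hfs ?_
    rw [List.perm_ext_iff_of_nodup htr.nodup hfs.nodup]
    intro e
    simp only [List.mem_filter, decide_eq_true_eq]
    constructor
    · intro he
      exact ⟨hsub.subset he, head!_le_of_sorted htr he, le_getLast!_of_sorted htr he⟩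
    · rintro ⟨hel, hlo, hhi⟩
      rcases eq_or_lt_of_le hlo with heq | hlt
      · exact heq ▸ List.head!_mem_self hne
      rcases eq_or_lt_of_le hhi with heq | hlt'
      · exact heq ▸ getLast!_mem hne
      exact hbet e hel hlt hlt'
  rw [key]
  exact filter_interval_infix _ _ hs

private lemma inits_filter_len (t : List ℕ) :
    ((List.inits t).filter (fun x => !x.isEmpty)).length = t.length := by
  induction t with
  | nil => rfl
  | cons a t ih =>
    rw [List.inits_cons, List.filter_cons_of_neg (by simp),
      List.filter_eq_self.mpr (fun x hx => by
        obtain ⟨y, _, rfl⟩ := List.mem_map.mp hx; rfl)]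
    simp

private lemma infix_count (l : List ℕ) :
    ((l.tails.flatMap List.inits).filter (fun x => !x.isEmpty)).length * 2 =
      l.length * (l.length + 1) := by
  induction l with
  | nil => rfl
  | cons a t ih =>
    rw [List.tails_cons, List.flatMap_cons, List.filter_append, List.length_append,
      Nat.add_mul, ih, inits_filter_len (a :: t)]
    simp only [List.length_cons]
    ring

/-- Under the contiguous semantics, every matched trend is a contiguous infix of the
stream, hence a stream of `n` events admits at most `n(n+1)/2` contiguous trends. -/
theorem stmt5 (l : List ℕ) (hs : l.Pairwise (· < ·)) :
    (∀ tr, ContiguousTrend l tr → tr <:+: l) ∧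
    (l.sublists.filter (fun tr => decide (ContiguousTrend l tr))).length ≤
      l.length * (l.length + 1) / 2 := by
  refine ⟨fun tr h => trend_infix hs h, ?_⟩
  have hnodup : (l.sublists.filter (fun tr => decide (ContiguousTrend l tr))).Nodup :=
    (List.nodup_sublists.mpr hs.nodup).filter _
  have hsubset : (l.sublists.filter (fun tr => decide (ContiguousTrend l tr))) ⊆
      (l.tails.flatMap List.inits).filter (fun x => !x.isEmpty) := by
    intro tr htr
    rw [List.mem_filter] at htr ⊢
    obtain ⟨-, hct⟩ := htr
    rw [decide_eq_true_eq] at hct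
    obtain ⟨t, hpre, hsuf⟩ := List.infix_iff_prefix_suffix.mp (trend_infix hs hct)
    refine ⟨List.mem_flatMap.mpr ⟨t, (List.mem_tails _ _).mpr hsuf,
      (List.mem_inits _ _).mpr hpre⟩, ?_⟩
    simpa using hct.1
  rw [Nat.le_div_iff_mul_le (by norm_num)]
  calc (l.sublists.filter (fun tr => decide (ContiguousTrend l tr))).length * 2
      ≤ ((l.tails.flatMap List.inits).filter (fun x => !x.isEmpty)).length * 2 :=
        Nat.mul_le_mul_right 2 (List.subperm_of_subset hnodup hsubset).length_le
    _ = l.length * (l.length + 1) := infix_count l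
end

section
/- Correctness of type-grained counting (skip-till-any-match, no adjacency predicates): after processing a stream event by event with the updates e.count = Σ_{E' ∈ predTypes(E)} E'.count (+1 if E is the start type) and E.count += e.count, the counter end(P).count equals the number of finished trends matched by the pattern P in the stream. -/
attribute [local instance] Classical.propDecidable

/-- One step of the type-grained trend count algorithm (skip-till-any-match, no
adjacency predicates): upon an event of type `E`,
`e.count = Σ_{E' ∈ predTypes E} E'.count (+1 if E is the start type)` and
`E.count += e.count`. -/
def stepType {T : Type*} [DecidableEq T] (pred : T → Finset T) (startT : T)
    (counts : T → ℕ) (E : T) : T → ℕ :=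
  let ec := (∑ E' ∈ pred E, counts E') + (if E = startT then 1 else 0)
  Function.update counts E (counts E + ec)

section Helpers
variable {T : Type*} [DecidableEq T]


def PTrend (pred : T → Finset T) (startT E : T) (tr : List (ℕ × T)) : Prop :=
  (tr.map Prod.snd).head? = some startT ∧
    (tr.map Prod.snd).Chain' (fun a b => a ∈ pred b) ∧
    (tr.map Prod.snd).getLast? = some E

theorem ptrend_concat (pred : T → Finset T) (startT E E0 : T) (tr : List (ℕ × T)) (i : ℕ) :
    PTrend pred startT E (tr ++ [(i, E0)]) ↔
      E = E0 ∧ ((tr = [] ∧ E0 = startT) ∨ (∃ E' ∈ pred E0, PTrend pred startT E' tr)) := by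
  unfold PTrend
  rcases eq_or_ne tr [] with rfl | h
  · simp [eq_comm, and_comm, List.Chain', List.isChain_singleton]
  · obtain ⟨x, xs, rfl⟩ := List.exists_cons_of_ne_nil h
    have h2 : ((x :: xs).map Prod.snd) ≠ [] := by simp
    obtain ⟨c, hc⟩ := List.getLast?_isSome.mpr h2 |> Option.isSome_iff_exists.mp
    rw [List.map_append]
    set s := List.map Prod.snd (x :: xs) with hs
    have : List.map Prod.snd [(i, E0)] = [E0] := rfl
    rw [this, List.Chain', List.isChain_append, List.getLast?_concat, List.head?_append, hc]
    have hh : s.head? ≠ none := by simp [hs]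
    rcases Option.ne_none_iff_exists'.mp hh with ⟨hd, hhd⟩
    rw [hhd]
    simp only [Option.mem_def, Option.some.injEq, forall_eq', List.isChain_singleton, true_and,
      List.head?_singleton, Option.orElse_some]
    have hor : ∀ y : Option T, (some hd).or y = some hd := fun y => rfl
    simp only [hor, Option.some.injEq]
    constructor
    · rintro ⟨h1, ⟨h2, h3⟩, rfl⟩
      exact ⟨rfl, Or.inr ⟨c, h3, h1, h2, rfl⟩⟩
    · rintro ⟨rfl, habs | ⟨E', hE', h1, h2, rfl⟩⟩
      · exact absurd habs.1 h
      · exact ⟨h1, ⟨h2, hE'⟩, rfl⟩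

theorem countP_or_bool {α : Type*} (L : List α) (r p q : α → Bool)
    (h : ∀ a, r a = true ↔ (p a = true ∨ q a = true))
    (hd : ∀ a, ¬(p a = true ∧ q a = true)) :
    L.countP r = L.countP p + L.countP q := by
  induction L with
  | nil => simp
  | cons a L ih =>
    simp only [List.countP_cons, ih]
    by_cases hp : p a = true <;> by_cases hq : q a = true
    · exact absurd ⟨hp, hq⟩ (hd a)
    all_goals
      have hr := h a
      by_cases hra : r a = true <;> simp_all <;> omega

theorem countP_nil_sublists {α : Type*} (l : List α) (r : List α → Bool)
    (h : ∀ tr, r tr = true ↔ tr = []) :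
    l.sublists.countP r = 1 := by
  have hr : r = fun tr => decide (tr = []) := by
    funext tr
    by_cases htr : tr = []
    · simp [htr, (h []).mpr rfl]
    · simp only [htr, decide_false]
      rw [Bool.eq_false_iff]
      exact fun hcon => htr ((h tr).mp hcon)
  subst hr
  induction l using List.reverseRecOn with
  | nil => simp
  | append_singleton xs a ih =>
    rw [List.sublists_concat, List.countP_append, ih, List.countP_map]
    have h0 : List.countP ((fun tr => decide (tr = [])) ∘ fun x => x ++ [a]) xs.sublists = 0 :=
      List.countP_eq_zero.mpr (by intro tr _; simp)
    rw [h0]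

theorem countP_ex (pred : T → Finset T) (startT : T) (s : Finset T) (L : List (List (ℕ × T)))
    (r : List (ℕ × T) → Bool) (f : T → List (ℕ × T) → Bool)
    (hr : ∀ tr, r tr = true ↔ ∃ E' ∈ s, PTrend pred startT E' tr)
    (hf : ∀ E' tr, f E' tr = true ↔ PTrend pred startT E' tr) :
    L.countP r = ∑ E' ∈ s, L.countP (f E') := by
  induction L with
  | nil => simp
  | cons a L ih =>
    simp only [List.countP_cons, ih, Finset.sum_add_distrib]
    congr 1
    by_cases hb : (a.map Prod.snd).head? = some startT ∧
        (a.map Prod.snd).Chain' (fun x y => x ∈ pred y)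
    · have hne : a.map Prod.snd ≠ [] := by
        intro h; rw [h] at hb; simp at hb
      obtain ⟨c, hc⟩ := List.getLast?_isSome.mpr hne |> Option.isSome_iff_exists.mp
      have hpt : ∀ E', PTrend pred startT E' a ↔ E' = c := by
        intro E'
        unfold PTrend
        rw [hc]
        simp [hb.1, hb.2, eq_comm]
      have hfa : ∀ E', f E' a = (decide (E' = c)) := by
        intro E'
        by_cases h : E' = c
        · subst h; simp [(hf E' a).mpr ((hpt E').mpr rfl)]
        · simp only [h, decide_false]
          rw [Bool.eq_false_iff]
          exact fun hcon => h ((hpt E').mp ((hf E' a).mp hcon))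
      have hra : r a = decide (c ∈ s) := by
        by_cases h : c ∈ s
        · simp only [h, decide_true]
          exact (hr a).mpr ⟨c, h, (hpt c).mpr rfl⟩
        · simp only [h, decide_false]
          rw [Bool.eq_false_iff]
          intro hcon
          obtain ⟨E', hE', hp⟩ := (hr a).mp hcon
          exact h ((hpt E').mp hp ▸ hE')
      simp only [hfa, hra, decide_eq_true_eq]
      rw [show (∑ x ∈ s, if x = c then 1 else 0) = if c ∈ s then 1 else 0 from
        Finset.sum_ite_eq' s c (fun _ => 1)]
    · have hno : ∀ E', ¬ PTrend pred startT E' a := by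
        intro E' h; exact hb ⟨h.1, h.2.1⟩
      have hra : r a = false := by
        rw [Bool.eq_false_iff]; intro hcon
        obtain ⟨E', _, hp⟩ := (hr a).mp hcon
        exact hno E' hp
      have hfa : ∀ E', f E' a = false := by
        intro E'
        rw [Bool.eq_false_iff]; intro hcon
        exact hno E' ((hf E' a).mp hcon)
      simp [hra, hfa]

theorem inv_lemma (pred : T → Finset T) (startT : T) (l : List (ℕ × T)) (E : T) :
    (l.map Prod.snd).foldl (stepType pred startT) (fun _ => 0) E =
      l.sublists.countP (fun tr => decide (PTrend pred startT E tr)) := by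
  induction l using List.reverseRecOn generalizing E with
  | nil =>
    simp only [List.map_nil, List.foldl_nil, List.sublists_nil]
    rw [List.countP_singleton]
    simp [PTrend]
  | append_singleton xs a ih =>
    obtain ⟨i, E0⟩ := a
    rw [List.map_append, List.foldl_append, List.sublists_concat, List.countP_append,
      List.countP_map]
    simp only [List.map_cons, List.map_nil, List.foldl_cons, List.foldl_nil]
    set C := (xs.map Prod.snd).foldl (stepType pred startT) (fun _ => 0) with hC
    have hcongr : List.countP ((fun tr => decide (PTrend pred startT E tr)) ∘
          fun x => x ++ [(i, E0)]) xs.sublists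
        = List.countP (fun tr => decide (E = E0 ∧ ((tr = [] ∧ E0 = startT) ∨
            (∃ E' ∈ pred E0, PTrend pred startT E' tr)))) xs.sublists := by
      apply List.countP_congr
      intro tr _
      simp only [Function.comp_apply, decide_eq_true_eq]
      exact ptrend_concat pred startT E E0 tr i
    rw [hcongr]
    unfold stepType
    by_cases hE : E = E0
    · subst hE
      rw [Function.update_self]
      have h1 : List.countP (fun tr => decide (E = E ∧ ((tr = [] ∧ E = startT) ∨
            (∃ E' ∈ pred E, PTrend pred startT E' tr)))) xs.sublists
          = List.countP (fun tr => decide ((tr = [] ∧ E = startT) ∨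
            (∃ E' ∈ pred E, PTrend pred startT E' tr))) xs.sublists := by
        apply List.countP_congr; intro tr _
        simp only [decide_eq_true_eq, true_and]
      have hsplit := countP_or_bool xs.sublists
        (fun tr => decide ((tr = [] ∧ E = startT) ∨ (∃ E' ∈ pred E, PTrend pred startT E' tr)))
        (fun tr => decide (tr = [] ∧ E = startT))
        (fun tr => decide (∃ E' ∈ pred E, PTrend pred startT E' tr))
        (by intro tr; simp)
        (by
          rintro tr ⟨h1', h2'⟩
          simp only [decide_eq_true_eq] at h1' h2'
          obtain ⟨E', _, hp⟩ := h2'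
          have := hp.2.2
          rw [h1'.1] at this
          simp at this)
      have hex := countP_ex pred startT (pred E) xs.sublists
        (fun tr => decide (∃ E' ∈ pred E, PTrend pred startT E' tr))
        (fun E' tr => decide (PTrend pred startT E' tr))
        (by intro tr; simp) (by intro E' tr; simp)
      rw [h1, hsplit, hex]
      have h2 : List.countP (fun tr => decide (tr = [] ∧ E = startT)) xs.sublists
          = if E = startT then 1 else 0 := by
        by_cases hst : E = startT
        · rw [if_pos hst]
          exact countP_nil_sublists xs _ (by intro tr; simp [hst])
        · rw [if_neg hst]
          apply List.countP_eq_zero.mpr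
          intro tr _; simp [hst]
      rw [h2]
      have h3 : ∀ E', List.countP (fun tr => decide (PTrend pred startT E' tr)) xs.sublists = C E' :=
        fun E' => (ih E').symm
      simp only [h3]
      ring
    · rw [Function.update_of_ne hE, ih]
      have h0 : List.countP (fun tr => decide (E = E0 ∧ ((tr = [] ∧ E0 = startT) ∨
            (∃ E' ∈ pred E0, PTrend pred startT E' tr)))) xs.sublists = 0 := by
        apply List.countP_eq_zero.mpr; intro tr _; simp [hE]
      omega

end Helpers

/-- A finished trend matched by the pattern `P`: a subsequence of the
(position-labelled) stream spelling an accepted run of the automaton of `P`, i.e.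
starting at the start type, ending at the end type, with each consecutive pair of types
connected by a transition (`predTypes`). -/
def FinishedTrend {T : Type*} (pred : T → Finset T) (startT endT : T)
    (stream tr : List (ℕ × T)) : Prop :=
  tr.Sublist stream ∧ (tr.map Prod.snd).head? = some startT ∧
    (tr.map Prod.snd).getLast? = some endT ∧
    (tr.map Prod.snd).Chain' (fun a b => a ∈ pred b)

/-- Correctness of type-grained counting: after processing the stream event by event,
the counter of the end type equals the number of finished trends matched by the pattern
in the stream. -/
theorem stmt10 {T : Type*} [DecidableEq T] (pred : T → Finset T) (startT endT : T)
    (stream : List T) :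
    stream.foldl (stepType pred startT) (fun _ => 0) endT =
      (stream.zipIdx.map Prod.swap).sublists.countP
        (fun tr => decide (FinishedTrend pred startT endT (stream.zipIdx.map Prod.swap) tr)) := by
  have h := inv_lemma pred startT (stream.zipIdx.map Prod.swap) endT
  rw [show List.map Prod.snd (List.map Prod.swap stream.zipIdx) = stream by
    rw [List.map_map]; exact List.zipIdx_map_fst 0 stream] at h
  rw [h]
  apply List.countP_congr
  intro tr htr
  have hsub : tr.Sublist (stream.zipIdx.map Prod.swap) := List.mem_sublists.mp htr
  simp only [decide_eq_true_eq]
  constructor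
  · rintro ⟨h1, h2, h3⟩
    exact ⟨hsub, h1, h3, h2⟩
  · rintro ⟨_, h1, h3, h2⟩
    exact ⟨h1, h2, h3⟩
end

section
/- Mixed-grained counting correctness: for a query under skip-till-any-match where adjacency predicates θ only constrain pairs (e_p, e) with e_p of a type in T_e, the recurrence e.count = Σ_{E' ∈ T_t ∩ predTypes(E)} E'.count + Σ_{e_p of type in T_e ∩ predTypes(E), θ(e_p,e)} e_p.count (+1 if E = start(P)) computes for each event e the number of (partial) trends ending at e, and the resulting final count equals the number of finished trends. -/
attribute [local instance] Classical.propDecidable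

/-- Adjacency of events `(e_p, e)` (events are position-type pairs): `e_p`'s type is a
predecessor type of `e`'s type, `e_p` is earlier than `e`, and the adjacency predicate
`θ` holds whenever `e_p`'s type lies in `Te` (θ only constrains pairs whose earlier
member has a type in `Te`). -/
def Adj {T : Type*} (pred : T → Finset T) (Te : Finset T)
    (θ : ℕ × T → ℕ × T → Bool) (ep e : ℕ × T) : Prop :=
  ep.2 ∈ pred e.2 ∧ ep.1 < e.1 ∧ (ep.2 ∈ Te → θ ep e = true)

/-- A partial trend ending at event `e`: a subsequence of the stream starting at the
start type, with each consecutive pair of chosen events adjacent, whose last event is `e`. -/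
def PartialEndingAt {T : Type*} (pred : T → Finset T) (Te : Finset T)
    (θ : ℕ × T → ℕ × T → Bool) (startT : T)
    (stream tr : List (ℕ × T)) (e : ℕ × T) : Prop :=
  tr.Sublist stream ∧ (tr.map Prod.snd).head? = some startT ∧
    tr.Chain' (Adj pred Te θ) ∧ tr.getLast? = some e

/-- A finished trend: a subsequence of the stream spelling a run of the automaton of the
pattern from the start type to the end type, each consecutive pair adjacent. -/
def FinishedM {T : Type*} (pred : T → Finset T) (Te : Finset T)
    (θ : ℕ × T → ℕ × T → Bool) (startT endT : T)
    (stream tr : List (ℕ × T)) : Prop :=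
  tr.Sublist stream ∧ (tr.map Prod.snd).head? = some startT ∧
    (tr.map Prod.snd).getLast? = some endT ∧ tr.Chain' (Adj pred Te θ)

/-- State of the mixed-grained algorithm: type-grained counters for the types in `T_t`
(the complement of `Te`), event-grained counters for the stored events of types in `Te`,
and the final count. -/
structure MState (T : Type*) where
  typeCounts : T → ℕ
  eventCounts : List ((ℕ × T) × ℕ)
  final : ℕ

/-- The intermediate count of a new event `e`:
`e.count = Σ_{E' ∈ T_t ∩ predTypes(E)} E'.count
 + Σ_{e_p of type in T_e ∩ predTypes(E), θ(e_p,e)} e_p.count (+1 if E = start(P))`. -/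
def ecOf {T : Type*} [DecidableEq T] (pred : T → Finset T) (Te : Finset T)
    (θ : ℕ × T → ℕ × T → Bool) (startT : T) (s : MState T) (e : ℕ × T) : ℕ :=
  (∑ E' ∈ (pred e.2).filter (fun E' => E' ∉ Te), s.typeCounts E') +
    ((s.eventCounts.filter
        (fun p => decide (p.1.2 ∈ pred e.2) && θ p.1 e)).map Prod.snd).sum +
    (if e.2 = startT then 1 else 0)

/-- One step of the mixed-grained counting algorithm. -/
def stepM {T : Type*} [DecidableEq T] (pred : T → Finset T) (Te : Finset T)
    (θ : ℕ × T → ℕ × T → Bool) (startT endT : T) (s : MState T) (e : ℕ × T) :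
    MState T :=
  let ec := ecOf pred Te θ startT s e
  { typeCounts := if e.2 ∈ Te then s.typeCounts
      else Function.update s.typeCounts e.2 (s.typeCounts e.2 + ec)
    eventCounts := if e.2 ∈ Te then (e, ec) :: s.eventCounts else s.eventCounts
    final := if e.2 = endT then s.final + ec else s.final }

namespace Helper

theorem mem_of_getLast?' {α : Type*} {l : List α} {a : α} (h : l.getLast? = some a) :
    a ∈ l := by
  cases l with
  | nil => simp at h
  | cons b l =>
    rw [List.getLast?_eq_getLast (l := b :: l) (by simp)] at h
    simpa [← Option.some_inj.mp h] using List.getLast_mem (l := b :: l) (by simp)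

theorem countP_split {α : Type*} (l : List α) (p q : α → Bool) :
    l.countP p = l.countP (fun a => p a && q a) + l.countP (fun a => p a && !q a) := by
  induction l with
  | nil => simp
  | cons a l ih =>
    simp only [List.countP_cons]
    cases hp : p a <;> cases hq : q a <;> simp [hp, hq] <;> omega

theorem countP_const_conj {α : Type*} (l : List α) (p : α → Bool) (c : Bool) :
    l.countP (fun a => p a && c) = if c = true then l.countP p else 0 := by
  cases c <;> simp

theorem sum_map_ind {α : Type*} (l : List α) (q : α → Bool) :
    (l.map (fun a => if q a = true then 1 else 0)).sum = l.countP q := by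
  induction l with
  | nil => simp
  | cons a l ih => cases hq : q a <;> simp [List.countP_cons, hq, ih] <;> omega

theorem sum_map_add' {α : Type*} (l : List α) (f g : α → ℕ) :
    (l.map f).sum + (l.map g).sum = (l.map (fun a => f a + g a)).sum := by
  induction l with
  | nil => simp
  | cons a l ih => simp only [List.map_cons, List.sum_cons, ← ih]; ring

theorem filter_map_sum {α : Type*} (l : List α) (p : α → Bool) (f : α → ℕ) :
    ((l.filter p).map f).sum = (l.map (fun a => if p a = true then f a else 0)).sum := by
  induction l with
  | nil => simp
  | cons a l ih => cases hp : p a <;> simp [List.filter_cons, hp, ih]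

theorem countP_beq_one {β : Type*} [DecidableEq β] (bs : List β) (hbs : bs.Nodup)
    (b0 : β) (hb0 : b0 ∈ bs) : bs.countP (fun b => decide (b = b0)) = 1 := by
  induction bs with
  | nil => simp at hb0
  | cons b bs ih =>
    rw [List.countP_cons]
    rcases List.mem_cons.mp hb0 with h | h
    · subst h
      have : bs.countP (fun b' => decide (b' = b0)) = 0 := by
        rw [List.countP_eq_zero]
        intro b' hb'
        simp only [decide_eq_true_iff]
        exact fun he => (List.nodup_cons.mp hbs).1 (he ▸ hb')
      simp [this]
    · rw [ih (List.nodup_cons.mp hbs).2 h]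
      have : ¬ (b = b0) := fun he => (List.nodup_cons.mp hbs).1 (he ▸ h)
      simp [this]

theorem snd_filter_map_sum {α : Type*} (M : List α) (f : α → ℕ) (q : α × ℕ → Bool) :
    (((M.map (fun a => (a, f a))).filter q).map Prod.snd).sum =
      ((M.filter (fun a => q (a, f a))).map f).sum := by
  induction M with
  | nil => simp
  | cons a M ih =>
    cases hq : q (a, f a) <;> simp [List.filter_cons, hq, ih]

theorem countP_group {α β : Type*} [DecidableEq β] (M : List α) (bs : List β)
    (hbs : bs.Nodup) (f : α → Option β) (p : α → Bool)
    (h : ∀ a ∈ M, p a = true → ∃ b ∈ bs, f a = some b) :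
    M.countP p = (bs.map (fun b => M.countP (fun a => decide (f a = some b) && p a))).sum := by
  induction M with
  | nil => simp
  | cons a M ih =>
    have hM := ih (fun a ha hp => h a (List.mem_cons_of_mem _ ha) hp)
    simp only [List.countP_cons]
    rw [hM, ← sum_map_add' bs (fun b => M.countP (fun a' => decide (f a' = some b) && p a'))
      (fun b => if (decide (f a = some b) && p a) = true then 1 else 0)]
    congr 1
    rw [sum_map_ind]
    cases hp : p a with
    | false =>
      simp only [Bool.and_false, List.countP_false]
      rfl
    | true =>
      obtain ⟨b0, hb0, hfb0⟩ := h a List.mem_cons_self hp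
      rw [if_pos rfl]
      have h1 : bs.countP (fun b => decide (f a = some b) && true) =
          bs.countP (fun b => decide (b = b0)) := by
        apply List.countP_congr
        intro b _
        simp only [hfb0, Bool.and_true, decide_eq_true_iff, Option.some_inj]
        exact eq_comm
      rw [h1, countP_beq_one bs hbs b0 hb0]

end Helper

section Core
variable {T : Type*} [DecidableEq T] (pred : T → Finset T) (Te : Finset T)
  (θ : ℕ × T → ℕ × T → Bool) (startT endT : T)

/-- trend property without the stream-sublist condition -/
def QP (tr : List (ℕ × T)) (e : ℕ × T) : Prop :=
  (tr.map Prod.snd).head? = some startT ∧ tr.Chain' (Adj pred Te θ) ∧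
    tr.getLast? = some e

noncomputable def NC (L : List (ℕ × T)) (e : ℕ × T) : ℕ :=
  L.sublists.countP (fun tr => decide (QP pred Te θ startT tr e))

def FQ (tr : List (ℕ × T)) : Prop :=
  (tr.map Prod.snd).head? = some startT ∧
    (tr.map Prod.snd).getLast? = some endT ∧ tr.Chain' (Adj pred Te θ)

noncomputable def FC (L : List (ℕ × T)) : ℕ :=
  L.sublists.countP (fun tr => decide (FQ pred Te θ startT endT tr))

theorem countP_partial (L M : List (ℕ × T)) (hLM : L.Sublist M) (e : ℕ × T) :
    L.sublists.countP
      (fun tr => decide (PartialEndingAt pred Te θ startT M tr e)) =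
    NC pred Te θ startT L e := by
  apply List.countP_congr
  intro tr htr
  have hsub : tr.Sublist M := (List.mem_sublists.mp htr).trans hLM
  simp only [decide_eq_true_iff]
  constructor
  · rintro ⟨-, h1, h2, h3⟩; exact ⟨h1, h2, h3⟩
  · rintro ⟨h1, h2, h3⟩; exact ⟨hsub, h1, h2, h3⟩

theorem countP_fin (L M : List (ℕ × T)) (hLM : L.Sublist M) :
    L.sublists.countP (fun tr => decide (FinishedM pred Te θ startT endT M tr)) =
    FC pred Te θ startT endT L := by
  apply List.countP_congr
  intro tr htr
  have hsub : tr.Sublist M := (List.mem_sublists.mp htr).trans hLM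
  simp only [decide_eq_true_iff]
  constructor
  · rintro ⟨-, h1, h2, h3⟩; exact ⟨h1, h2, h3⟩
  · rintro ⟨h1, h2, h3⟩; exact ⟨hsub, h1, h2, h3⟩

theorem NC_stable (L : List (ℕ × T)) (e ep : ℕ × T) (hep : ep.1 < e.1) :
    NC pred Te θ startT (L ++ [e]) ep = NC pred Te θ startT L ep := by
  unfold NC
  rw [List.sublists_concat, List.countP_append, List.countP_map]
  have : List.countP
      ((fun tr => decide (QP pred Te θ startT tr ep)) ∘ (fun x => x ++ [e]))
      L.sublists = 0 := by
    rw [List.countP_eq_zero]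
    intro tr _
    simp only [Function.comp_apply, decide_eq_true_iff]
    rintro ⟨-, -, h3⟩
    rw [List.getLast?_concat] at h3
    have he : e = ep := Option.some_inj.mp h3
    subst he
    exact lt_irrefl _ hep
  rw [this]
  omega

theorem NC_concat_self (L : List (ℕ × T)) (e : ℕ × T)
    (hlt : ∀ x ∈ L, x.1 < e.1) :
    NC pred Te θ startT (L ++ [e]) e =
      L.sublists.countP (fun tr => decide (QP pred Te θ startT (tr ++ [e]) e)) := by
  unfold NC
  rw [List.sublists_concat, List.countP_append, List.countP_map]
  have h0 : List.countP (fun tr => decide (QP pred Te θ startT tr e)) L.sublists = 0 := by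
    rw [List.countP_eq_zero]
    intro tr htr
    simp only [decide_eq_true_iff]
    rintro ⟨-, -, h3⟩
    have hmem : e ∈ tr := Helper.mem_of_getLast?' h3
    have : e ∈ L := (List.mem_sublists.mp htr).subset hmem
    exact absurd (hlt e this) (lt_irrefl _)
  rw [h0]
  simp only [Nat.zero_add]
  apply List.countP_congr
  intro tr _
  simp [Function.comp]


theorem NC_concat (L : List (ℕ × T)) (e : ℕ × T)
    (hlt : ∀ x ∈ L, x.1 < e.1)
    (hpw : L.Pairwise (fun a b : ℕ × T => a.1 < b.1)) :
    NC pred Te θ startT (L ++ [e]) e =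
      (if e.2 = startT then 1 else 0) +
        (L.map (fun ep =>
          if Adj pred Te θ ep e then NC pred Te θ startT L ep else 0)).sum := by
  have hnd : L.Nodup := hpw.imp fun h he => by subst he; exact lt_irrefl _ h
  rw [NC_concat_self pred Te θ startT L e hlt]
  rw [Helper.countP_split L.sublists _ (fun tr => tr.isEmpty)]
  congr 1
  · -- empty part
    rw [List.countP_congr
      (q := fun tr => decide (tr = ([] : List (ℕ × T))) && decide (e.2 = startT))]
    · rw [Helper.countP_const_conj]
      by_cases hst : e.2 = startT
      · rw [if_pos (by simp [hst]), if_pos hst]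
        exact Helper.countP_beq_one _ (List.nodup_sublists.mpr hnd) []
          (List.mem_sublists.mpr (List.nil_sublist L))
      · rw [if_neg (by simp [hst]), if_neg hst]
    · intro tr _
      cases tr with
      | nil => simp [QP, List.Chain', List.isChain_singleton]
      | cons a tr' => simp
  · -- nonempty part
    rw [Helper.countP_group L.sublists L hnd (fun tr => tr.getLast?) _ ?_]
    · apply congrArg
      apply List.map_congr_left
      intro ep hep
      rw [List.countP_congr
        (q := fun tr => decide (QP pred Te θ startT tr ep) &&
          decide (Adj pred Te θ ep e))]
      · rw [Helper.countP_const_conj]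
        by_cases hA : Adj pred Te θ ep e
        · rw [if_pos (by simpa), if_pos hA]; rfl
        · rw [if_neg (by simpa), if_neg hA]
      · intro tr _
        simp only [Bool.and_eq_true, decide_eq_true_iff,
          Bool.not_eq_true', List.isEmpty_eq_false_iff]
        constructor
        · rintro ⟨hlast, ⟨h1, h2, -⟩, hne⟩
          obtain ⟨a, tr', rfl⟩ : ∃ a tr', tr = a :: tr' := by
            cases tr with
            | nil => exact absurd rfl hne
            | cons a tr' => exact ⟨a, tr', rfl⟩
          replace h2 := List.isChain_append.mp h2
          obtain ⟨hc1, -, hc3⟩ := h2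
          have hAdj : Adj pred Te θ ep e := by
            apply hc3 ep (by simpa using hlast) e
            simp
          refine ⟨⟨?_, hc1, hlast⟩, hAdj⟩
          simpa using h1
        · rintro ⟨⟨h1, h2, h3⟩, hA⟩
          have hne : tr ≠ [] := by
            intro h; rw [h] at h3; simp at h3
          refine ⟨h3, ⟨?_, ?_, List.getLast?_concat⟩, hne⟩
          · obtain ⟨a, tr', rfl⟩ : ∃ a tr', tr = a :: tr' := by
              cases tr with
              | nil => exact absurd rfl hne
              | cons a tr' => exact ⟨a, tr', rfl⟩
            simpa using h1
          · apply List.isChain_append.mpr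
            refine ⟨h2, List.isChain_singleton e, ?_⟩
            intro x hx y hy
            rw [h3] at hx
            simp only [Option.mem_def, Option.some_inj] at hx
            simp only [List.head?_cons, Option.mem_def, Option.some_inj] at hy
            subst hx; subst hy; exact hA
    · intro tr htr hp
      simp only [Bool.and_eq_true, Bool.not_eq_true', List.isEmpty_eq_false_iff] at hp
      obtain ⟨-, hne⟩ := hp
      obtain ⟨b, hb⟩ := Option.ne_none_iff_exists'.mp
        (fun h => hne (List.getLast?_eq_none_iff.mp h))
      exact ⟨b, (List.mem_sublists.mp htr).subset (Helper.mem_of_getLast?' hb), hb⟩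

theorem FC_concat (L : List (ℕ × T)) (e : ℕ × T)
    (hlt : ∀ x ∈ L, x.1 < e.1) :
    FC pred Te θ startT endT (L ++ [e]) =
      FC pred Te θ startT endT L +
        (if e.2 = endT then NC pred Te θ startT (L ++ [e]) e else 0) := by
  unfold FC
  rw [List.sublists_concat, List.countP_append, List.countP_map]
  congr 1
  rw [NC_concat_self pred Te θ startT L e hlt]
  rw [List.countP_congr
    (q := fun tr => decide (QP pred Te θ startT (tr ++ [e]) e) &&
      decide (e.2 = endT)) (l := L.sublists) ?_]
  · rw [Helper.countP_const_conj]
    by_cases hend : e.2 = endT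
    · rw [if_pos (by simpa), if_pos hend]
    · rw [if_neg (by simpa), if_neg hend]
    -- orientation fix below if needed
  · intro tr _
    simp only [Function.comp_apply, Bool.and_eq_true, decide_eq_true_iff]
    unfold FQ QP
    simp only [List.map_append, List.map_cons, List.map_nil, List.getLast?_concat,
      Option.some_inj]
    tauto

theorem sum_swap (F : Finset T) (L : List (ℕ × T)) (f : ℕ × T → ℕ) :
    (∑ E' ∈ F, ((L.filter (fun ep => decide (ep.2 = E'))).map f).sum) =
      (L.map (fun ep => if ep.2 ∈ F then f ep else 0)).sum := by
  induction L with
  | nil => simp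
  | cons a L ih =>
    have step1 : ∀ E' ∈ F,
        (((a :: L).filter (fun ep => decide (ep.2 = E'))).map f).sum =
          (if a.2 = E' then f a else 0) +
            ((L.filter (fun ep => decide (ep.2 = E'))).map f).sum := by
      intro E' _
      by_cases h : a.2 = E' <;> simp [List.filter_cons, h]
    rw [Finset.sum_congr rfl step1, Finset.sum_add_distrib, ih,
      Finset.sum_ite_eq F a.2 (fun _ => f a)]
    simp

noncomputable def MInv (L : List (ℕ × T)) (s : MState T) : Prop :=
  (∀ E', E' ∉ Te → s.typeCounts E' =
      ((L.filter (fun ep => decide (ep.2 = E'))).map (NC pred Te θ startT L)).sum) ∧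
  s.eventCounts = (L.filter (fun ep => decide (ep.2 ∈ Te))).reverse.map
      (fun ep => (ep, NC pred Te θ startT L ep)) ∧
  s.final = FC pred Te θ startT endT L

theorem ecOf_eq (L : List (ℕ × T)) (s : MState T) (e : ℕ × T)
    (hlt : ∀ x ∈ L, x.1 < e.1) (h : MInv pred Te θ startT endT L s) :
    ecOf pred Te θ startT s e =
      (if e.2 = startT then 1 else 0) +
        (L.map (fun ep =>
          if Adj pred Te θ ep e then NC pred Te θ startT L ep else 0)).sum := by
  obtain ⟨h1, h2, -⟩ := h
  unfold ecOf
  have t1 : (∑ E' ∈ (pred e.2).filter (fun E' => E' ∉ Te), s.typeCounts E') =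
      (L.map (fun ep => if ep.2 ∈ (pred e.2).filter (fun E' => E' ∉ Te)
        then NC pred Te θ startT L ep else 0)).sum := by
    rw [Finset.sum_congr rfl
      (fun E' hE' => h1 E' (Finset.mem_filter.mp hE').2)]
    exact sum_swap _ L _
  have t2 : ((s.eventCounts.filter
        (fun p => decide (p.1.2 ∈ pred e.2) && θ p.1 e)).map Prod.snd).sum =
      (L.map (fun ep =>
        if (decide (ep.2 ∈ Te) && (decide (ep.2 ∈ pred e.2) && θ ep e)) = true
        then NC pred Te θ startT L ep else 0)).sum := by
    rw [h2]
    rw [Helper.snd_filter_map_sum]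
    rw [List.filter_reverse, List.map_reverse, List.sum_reverse]
    rw [List.filter_filter]
    rw [Helper.filter_map_sum]
    apply congrArg
    apply List.map_congr_left
    intro ep _
    by_cases hTe : ep.2 ∈ Te <;>
      by_cases hpr : ep.2 ∈ pred e.2 <;>
      by_cases hθ : θ ep e = true <;>
      simp [hTe, hpr, hθ]
  rw [t1, t2, Helper.sum_map_add' L]
  rw [Nat.add_comm]
  congr 1
  apply congrArg
  apply List.map_congr_left
  intro ep hep
  have hfst : ep.1 < e.1 := hlt ep hep
  by_cases hpr : ep.2 ∈ pred e.2
  · by_cases hTe : ep.2 ∈ Te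
    · rw [if_neg (by simp [Finset.mem_filter, hTe])]
      by_cases hθ : θ ep e = true
      · have hA : Adj pred Te θ ep e := ⟨hpr, hfst, fun _ => hθ⟩
        rw [if_pos (by simp [hTe, hpr, hθ]), if_pos hA, Nat.zero_add]
      · have hA : ¬ Adj pred Te θ ep e := fun h => hθ (h.2.2 hTe)
        rw [if_neg (by simp [hθ]), if_neg hA]
    · have hA : Adj pred Te θ ep e := ⟨hpr, hfst, fun h => absurd h hTe⟩
      rw [if_pos (by simp [Finset.mem_filter, hTe, hpr]),
        if_neg (by simp [hTe]), if_pos hA, Nat.add_zero]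
  · have hA : ¬ Adj pred Te θ ep e := fun h => hpr h.1
    rw [if_neg (by simp [Finset.mem_filter, hpr]),
        if_neg (by simp [hpr]), if_neg hA]

theorem step_Inv (L : List (ℕ × T)) (s : MState T) (e : ℕ × T)
    (hlt : ∀ x ∈ L, x.1 < e.1)
    (hpw : L.Pairwise (fun a b : ℕ × T => a.1 < b.1))
    (h : MInv pred Te θ startT endT L s) :
    MInv pred Te θ startT endT (L ++ [e]) (stepM pred Te θ startT endT s e) := by
  obtain ⟨h1, h2, h3⟩ := h
  have hec : ecOf pred Te θ startT s e = NC pred Te θ startT (L ++ [e]) e := by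
    rw [NC_concat pred Te θ startT L e hlt hpw,
      ecOf_eq pred Te θ startT endT L s e hlt ⟨h1, h2, h3⟩]
  have hstab : ∀ ep ∈ L, NC pred Te θ startT (L ++ [e]) ep =
      NC pred Te θ startT L ep :=
    fun ep hep => NC_stable pred Te θ startT L e ep (hlt ep hep)
  refine ⟨?_, ?_, ?_⟩
  · intro E' hE'
    have base : ((L.filter (fun ep => decide (ep.2 = E'))).map
        (NC pred Te θ startT (L ++ [e]))).sum =
        ((L.filter (fun ep => decide (ep.2 = E'))).map
          (NC pred Te θ startT L)).sum := by
      apply congrArg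
      exact List.map_congr_left fun ep hep => hstab ep (List.mem_of_mem_filter hep)
    rw [List.filter_append, List.map_append, List.sum_append, base]
    show (if e.2 ∈ Te then s.typeCounts
      else Function.update s.typeCounts e.2
        (s.typeCounts e.2 + ecOf pred Te θ startT s e)) E' = _
    by_cases hTe : e.2 ∈ Te
    · rw [if_pos hTe]
      have hne : ¬ (e.2 = E') := fun he => hE' (he ▸ hTe)
      rw [List.filter_cons]
      simp only [decide_eq_true_iff, hne, if_false, List.filter_nil,
        List.map_nil, List.sum_nil, Nat.add_zero]
      exact h1 E' hE'
    · rw [if_neg hTe]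
      by_cases heq : e.2 = E'
      · subst heq
        rw [Function.update_self, h1 e.2 hE', List.filter_cons]
        simp [hec]
      · rw [Function.update_of_ne (fun hE => heq hE.symm) _ _, h1 E' hE',
          List.filter_cons]
        simp [heq]
  · show (if e.2 ∈ Te then (e, ecOf pred Te θ startT s e) :: s.eventCounts
      else s.eventCounts) = _
    have base : (L.filter (fun ep => decide (ep.2 ∈ Te))).reverse.map
        (fun ep => (ep, NC pred Te θ startT (L ++ [e]) ep)) =
        (L.filter (fun ep => decide (ep.2 ∈ Te))).reverse.map
          (fun ep => (ep, NC pred Te θ startT L ep)) := by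
      apply List.map_congr_left
      intro ep hep
      rw [hstab ep (List.mem_of_mem_filter (List.mem_reverse.mp hep))]
    rw [List.filter_append, List.reverse_append]
    by_cases hTe : e.2 ∈ Te
    · rw [if_pos hTe, List.filter_cons]
      simp only [decide_eq_true_iff, hTe, if_true, List.filter_nil,
        List.reverse_cons, List.reverse_nil, List.nil_append]
      rw [List.map_append, base, h2, hec]
      rfl
    · rw [if_neg hTe, List.filter_cons]
      simp only [decide_eq_true_iff, hTe, if_false, List.filter_nil,
        List.reverse_nil, List.nil_append]
      rw [h2, base]
  · show (if e.2 = endT then s.final + ecOf pred Te θ startT s e else s.final) = _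
    rw [FC_concat pred Te θ startT endT L e hlt, ← h3, hec]
    by_cases hend : e.2 = endT
    · rw [if_pos hend, if_pos hend]
    · rw [if_neg hend, if_neg hend, Nat.add_zero]

end Core


/-- Mixed-grained counting correctness (skip-till-any-match with adjacency predicates):
the recurrence computes for each event `e` the number of (partial) trends ending at `e`,
and the resulting final count equals the number of finished trends. -/
theorem stmt14 {T : Type*} [DecidableEq T] (pred : T → Finset T) (Te : Finset T)
    (θ : ℕ × T → ℕ × T → Bool) (startT endT : T) (stream : List T) :
    (∀ i (h : i < (stream.mapIdx fun i a => (i, a)).length),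
      ecOf pred Te θ startT
          (((stream.mapIdx fun i a => (i, a)).take i).foldl (stepM pred Te θ startT endT)
            ⟨fun _ => 0, [], 0⟩) (stream.mapIdx fun i a => (i, a))[i] =
        ((stream.mapIdx fun i a => (i, a)).take (i + 1)).sublists.countP
          (fun tr => decide (PartialEndingAt pred Te θ startT
            ((stream.mapIdx fun i a => (i, a)).take (i + 1)) tr (stream.mapIdx fun i a => (i, a))[i]))) ∧
    ((stream.mapIdx fun i a => (i, a)).foldl (stepM pred Te θ startT endT) ⟨fun _ => 0, [], 0⟩).final =
      (stream.mapIdx fun i a => (i, a)).sublists.countP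
        (fun tr => decide (FinishedM pred Te θ startT endT (stream.mapIdx fun i a => (i, a)) tr)) := by
  have hpwS : (stream.mapIdx fun i a => (i, a)).Pairwise (fun a b : ℕ × T => a.1 < b.1) := by
    rw [List.pairwise_iff_getElem]
    intro i j hi hj hij
    simp [hij]
  have htake : ∀ n (hn : n < (stream.mapIdx fun i a => (i, a)).length),
      ∀ x ∈ (stream.mapIdx fun i a => (i, a)).take n, x.1 < ((stream.mapIdx fun i a => (i, a))[n]).1 := by
    intro n hn x hx
    rw [List.getElem_mapIdx]
    obtain ⟨j, hj, hxj⟩ := List.mem_iff_getElem.mp hx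
    have hj' : j < n := lt_of_lt_of_le hj
      (by rw [List.length_take]; exact min_le_left _ _)
    have hjlen : j < (stream.mapIdx fun i a => (i, a)).length := lt_trans hj' hn
    have : x = (stream.mapIdx fun i a => (i, a))[j] := by rw [← hxj, List.getElem_take]
    rw [this, List.getElem_mapIdx]
    exact hj'
  have hpwt : ∀ n, ((stream.mapIdx fun i a => (i, a)).take n).Pairwise (fun a b : ℕ × T => a.1 < b.1) :=
    fun n => hpwS.sublist (List.take_sublist n _)
  have key : ∀ n, n ≤ (stream.mapIdx fun i a => (i, a)).length →
      MInv pred Te θ startT endT ((stream.mapIdx fun i a => (i, a)).take n)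
        (((stream.mapIdx fun i a => (i, a)).take n).foldl (stepM pred Te θ startT endT)
          ⟨fun _ => 0, [], 0⟩) := by
    intro n
    induction n with
    | zero =>
      intro _
      simp only [List.take_zero, List.foldl_nil]
      refine ⟨fun E' _ => rfl, rfl, ?_⟩
      have hFC : FC pred Te θ startT endT ([] : List (ℕ × T)) = 0 := by
        unfold FC
        rw [List.sublists_nil, List.countP_eq_zero.mpr]
        intro tr htr
        have : tr = [] := by simpa using htr
        subst this
        simp only [decide_eq_true_iff]
        rintro ⟨h1, -, -⟩
        simp at h1
      exact hFC.symm
    | succ n ih =>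
      intro hn
      have hn' : n < (stream.mapIdx fun i a => (i, a)).length := hn
      rw [List.take_succ, List.getElem?_eq_getElem hn']
      show MInv pred Te θ startT endT _
        (((stream.mapIdx fun i a => (i, a)).take n ++ [(stream.mapIdx fun i a => (i, a))[n]]).foldl
          (stepM pred Te θ startT endT) ⟨fun _ => 0, [], 0⟩)
      rw [List.foldl_concat]
      exact step_Inv pred Te θ startT endT _ _ _ (htake n hn') (hpwt n)
        (ih (le_of_lt hn'))
  constructor
  · intro i h
    have hInv := key i (le_of_lt h)
    have htk : (stream.mapIdx fun i a => (i, a)).take (i + 1) =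
        (stream.mapIdx fun i a => (i, a)).take i ++ [(stream.mapIdx fun i a => (i, a))[i]] := by
      rw [List.take_succ, List.getElem?_eq_getElem h]
      rfl
    rw [countP_partial pred Te θ startT _ _ (List.Sublist.refl _) _, htk,
      NC_concat pred Te θ startT _ _ (htake i h) (hpwt i),
      ecOf_eq pred Te θ startT endT _ _ _ (htake i h) hInv]
  · have hfin := key (stream.mapIdx fun i a => (i, a)).length (le_refl _)
    rw [List.take_length] at hfin
    rw [hfin.2.2]
    exact (countP_fin pred Te θ startT endT _ _ (List.Sublist.refl _)).symm
end
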